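/- If r is an integer with q^n · P^{-2} · log q < r ≤ s_n, then the number of elements b ∈ F_q for which S_{f_b}(r) is empty is at most q/log q. -/

import Mathlib

/-- The box `X^{n+1}(r) = {0,…,s₁−1} × ⋯ × {0,…,s_n−1} × {0,…,r−1}` of exponent tuples,
where `sᵢ` is the multiplicative order of `g i` and the last coordinate is truncated
at `r`. -/
noncomputable def expBox {F : Type*} [Monoid F] {n : ℕ} (g : Fin (n + 1) → Fˣ) (r : ℕ) :
    Finset (Fin (n + 1) → ℕ) :=
  Fintype.piFinset fun i => Finset.range (if i = Fin.last n then r else orderOf (g i))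

/-- The exponential polynomial `f_b(x) = a₁g₁^{x₁} + ⋯ + a_{n+1}g_{n+1}^{x_{n+1}} − b`. -/
noncomputable def expPoly {F : Type*} [Field F] {n : ℕ} (a g : Fin (n + 1) → Fˣ) (b : F)
    (x : Fin (n + 1) → ℕ) : F :=
  (∑ i, (a i : F) * (g i : F) ^ x i) - b

/-- `S_{f_b}(r)`: the set of zeros of `f_b` in the box `X^{n+1}(r)`. -/
noncomputable def solSet {F : Type*} [Field F] [DecidableEq F] {n : ℕ} (a g : Fin (n + 1) → Fˣ)
    (b : F) (r : ℕ) : Finset (Fin (n + 1) → ℕ) :=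
  (expBox g r).filter fun x => expPoly a g b x = 0

/-- `N_{f_b}(r) = #S_{f_b}(r)`. -/
noncomputable def solCount {F : Type*} [Field F] [DecidableEq F] {n : ℕ} (a g : Fin (n + 1) → Fˣ)
    (b : F) (r : ℕ) : ℕ :=
  (solSet a g b r).card

/-- `P = ∏_{l=1}^{n} s_l`, the product of the multiplicative orders of all the `g i`
except the last one. -/
noncomputable def ordProd {F : Type*} [Monoid F] {n : ℕ} (g : Fin (n + 1) → Fˣ) : ℕ :=
  ∏ i : Fin n, orderOf (g i.castSucc)




open Finset

namespace Statement1Aux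

set_option linter.unusedSectionVars false

variable {F : Type*} [Field F] [Fintype F] [DecidableEq F]

lemma conj_addChar (ψ : AddChar F ℂ) (t : F) :
    (starRingEnd ℂ) (ψ t) = ψ (-t) := by
  have hR : 0 < ringChar F := Nat.pos_of_ne_zero (CharP.ringChar_ne_zero_of_finite F)
  rw [AddChar.starComp_apply hR, AddChar.inv_apply]

lemma addChar_map_sum {ι : Type*} (ψ : AddChar F ℂ) (s : Finset ι) (f : ι → F) :
    ψ (∑ i ∈ s, f i) = ∏ i ∈ s, ψ (f i) := by
  induction s using Finset.cons_induction with
  | empty => simp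
  | cons i s hi ih => rw [Finset.sum_cons, Finset.prod_cons, AddChar.map_add_eq_mul, ih]

lemma sum_range_shift (G : ℕ → ℂ) (s : ℕ) (hG : ∀ x, G (x + s) = G x) (j : ℕ) :
    ∑ x ∈ Finset.range s, G (j + x) = ∑ x ∈ Finset.range s, G x := by
  induction j with
  | zero => simp
  | succ j ih =>
    have h1 := Finset.sum_range_succ' (fun x => G (j + x)) s
    have h2 := Finset.sum_range_succ (fun x => G (j + x)) s
    have h3 : G (j + s) = G (j + 0) := by simpa using hG j
    have key : ∑ x ∈ Finset.range s, G (j + 1 + x) = ∑ x ∈ Finset.range s, G (j + x) := by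
      have h4 : ∑ x ∈ Finset.range s, G (j + 1 + x)
          = ∑ x ∈ Finset.range s, (fun x => G (j + x)) (x + 1) := by
        apply Finset.sum_congr rfl
        intro x _
        have : j + 1 + x = j + (x + 1) := by omega
        rw [this]
      rw [h4]
      simp only at h1 h2 ⊢
      linear_combination h2 - h1 + h3
    rw [key, ih]

/-- The fundamental second-moment identity for character sums. -/
lemma sum_normSq {ι : Type*} (ψ : AddChar F ℂ)
    (hψ : ∀ t : F, ∑ c : F, ψ (c * t) = if t = 0 then (Fintype.card F : ℂ) else 0)
    (s : Finset ι) (f : ι → F) :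
    ∑ c : F, ‖∑ x ∈ s, ψ (c * f x)‖ ^ 2
      = (Fintype.card F : ℝ) * ∑ x ∈ s, ∑ y ∈ s, (if f x = f y then (1 : ℝ) else 0) := by
  have key : ∑ c : F, (∑ x ∈ s, ψ (c * f x)) * (starRingEnd ℂ) (∑ x ∈ s, ψ (c * f x))
      = (Fintype.card F : ℂ) * ∑ x ∈ s, ∑ y ∈ s, (if f x = f y then (1 : ℂ) else 0) := by
    have expand : ∀ c : F,
        (∑ x ∈ s, ψ (c * f x)) * (starRingEnd ℂ) (∑ x ∈ s, ψ (c * f x))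
          = ∑ x ∈ s, ∑ y ∈ s, ψ (c * (f x - f y)) := by
      intro c
      rw [map_sum, Finset.sum_mul_sum]
      refine Finset.sum_congr rfl fun x _ => Finset.sum_congr rfl fun y _ => ?_
      rw [conj_addChar, ← AddChar.map_add_eq_mul]
      ring_nf
    calc ∑ c : F, (∑ x ∈ s, ψ (c * f x)) * (starRingEnd ℂ) (∑ x ∈ s, ψ (c * f x))
        = ∑ c : F, ∑ x ∈ s, ∑ y ∈ s, ψ (c * (f x - f y)) :=
          Finset.sum_congr rfl fun c _ => expand c
      _ = ∑ x ∈ s, ∑ y ∈ s, ∑ c : F, ψ (c * (f x - f y)) := by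
          rw [Finset.sum_comm]
          exact Finset.sum_congr rfl fun x _ => Finset.sum_comm
      _ = ∑ x ∈ s, ∑ y ∈ s, (if f x - f y = 0 then (Fintype.card F : ℂ) else 0) :=
          Finset.sum_congr rfl fun x _ => Finset.sum_congr rfl fun y _ => hψ _
      _ = (Fintype.card F : ℂ) * ∑ x ∈ s, ∑ y ∈ s, (if f x = f y then (1 : ℂ) else 0) := by
          rw [Finset.mul_sum]
          refine Finset.sum_congr rfl fun x _ => ?_
          rw [Finset.mul_sum]
          refine Finset.sum_congr rfl fun y _ => ?_
          by_cases h : f x = f y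
          · rw [if_pos h, if_pos (sub_eq_zero.mpr h), mul_one]
          · rw [if_neg h, if_neg (fun hh => h (sub_eq_zero.mp hh)), mul_zero]
  have cast1 : ((∑ c : F, ‖∑ x ∈ s, ψ (c * f x)‖ ^ 2 : ℝ) : ℂ)
      = ∑ c : F, (∑ x ∈ s, ψ (c * f x)) * (starRingEnd ℂ) (∑ x ∈ s, ψ (c * f x)) := by
    push_cast
    refine Finset.sum_congr rfl fun c _ => ?_
    exact (Complex.mul_conj' _).symm
  have cast2 : (((Fintype.card F : ℝ) * ∑ x ∈ s, ∑ y ∈ s, (if f x = f y then (1 : ℝ) else 0) : ℝ) : ℂ)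
      = (Fintype.card F : ℂ) * ∑ x ∈ s, ∑ y ∈ s, (if f x = f y then (1 : ℂ) else 0) := by
    push_cast
    refine congrArg _ (Finset.sum_congr rfl fun x _ => Finset.sum_congr rfl fun y _ => ?_)
    split <;> simp
  have := cast1.trans (key.trans cast2.symm)
  exact_mod_cast this

/-- Diagonal count. -/
lemma diag_count {m : ℕ} {f : ℕ → F} (hf : ∀ x ∈ Finset.range m, ∀ y ∈ Finset.range m,
    (f x = f y ↔ x = y)) :
    ∑ x ∈ Finset.range m, ∑ y ∈ Finset.range m, (if f x = f y then (1 : ℝ) else 0) = m := by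
  have : ∀ x ∈ Finset.range m, ∑ y ∈ Finset.range m, (if f x = f y then (1 : ℝ) else 0)
      = 1 := by
    intro x hx
    have : ∀ y ∈ Finset.range m, (if f x = f y then (1:ℝ) else 0) = if x = y then (1:ℝ) else 0 :=
      fun y hy => if_congr (hf x hx y hy) rfl rfl
    rw [Finset.sum_congr rfl this, Finset.sum_ite_eq]
    simp [hx]
  rw [Finset.sum_congr rfl this]
  simp

lemma moment (ψ : AddChar F ℂ)
    (hψ : ∀ t : F, ∑ c : F, ψ (c * t) = if t = 0 then (Fintype.card F : ℂ) else 0)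
    (w v : Fˣ) (m : ℕ) (hm : m ≤ orderOf v) :
    ∑ c : F, ‖∑ x ∈ Finset.range m, ψ (c * ((w : F) * (v : F) ^ x))‖ ^ 2
      = (Fintype.card F : ℝ) * m := by
  rw [sum_normSq ψ hψ (Finset.range m) (fun x => (w : F) * (v : F) ^ x)]
  congr 1
  apply diag_count
  intro x hx y hy
  simp only [Finset.mem_range] at hx hy
  constructor
  · intro h
    have h2 : (v : F) ^ x = (v : F) ^ y := mul_left_cancel₀ (Units.ne_zero w) h
    have := orderOf_units (y := v)
    exact pow_injOn_Iio_orderOf (by simp only [Set.mem_Iio, this]; omega)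
      (by simp only [Set.mem_Iio, this]; omega) h2
  · rintro rfl; rfl

lemma pointwise (ψ : AddChar F ℂ)
    (hψ : ∀ t : F, ∑ c : F, ψ (c * t) = if t = 0 then (Fintype.card F : ℂ) else 0)
    (u v : Fˣ) :
    ‖∑ x ∈ Finset.range (orderOf v), ψ ((u : F) * (v : F) ^ x)‖ ^ 2
      ≤ (Fintype.card F : ℝ) := by
  set s := orderOf v with hs
  have hs0 : 0 < s := orderOf_pos v
  set SS : F → ℝ := fun d => ‖∑ x ∈ Finset.range s, ψ (d * (v : F) ^ x)‖ ^ 2 with hSS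
  have hSSnn : ∀ d, 0 ≤ SS d := fun d => by positivity
  have hvs : (v : F) ^ s = 1 := by
    rw [← Units.val_pow_eq_pow_val, pow_orderOf_eq_one, Units.val_one]
  have inv : ∀ (d : F) (j : ℕ), SS (d * (v : F) ^ j) = SS d := by
    intro d j
    have hsum : ∑ x ∈ Finset.range s, ψ (d * (v : F) ^ j * (v : F) ^ x)
        = ∑ x ∈ Finset.range s, ψ (d * (v : F) ^ x) := by
      have step1 : ∀ x ∈ Finset.range s, ψ (d * (v:F) ^ j * (v:F) ^ x)
          = (fun t => ψ (d * (v:F) ^ t)) (j + x) := by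
        intro x _
        simp only []
        rw [pow_add, mul_assoc]
      rw [Finset.sum_congr rfl step1]
      exact sum_range_shift (fun t => ψ (d * (v:F) ^ t)) s
        (fun x => by simp only [pow_add, hvs, mul_one]) j
    simp only [hSS]
    rw [hsum]
  -- injectivity of j ↦ u * v^j on range s
  have hinj : Set.InjOn (fun j : ℕ => (u : F) * (v : F) ^ j) (Finset.range s) := by
    intro x hx y hy h
    simp only [Finset.coe_range, Set.mem_Iio] at hx hy
    have h2 : (v : F) ^ x = (v : F) ^ y := mul_left_cancel₀ (Units.ne_zero u) h
    have hou := orderOf_units (y := v)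
    exact pow_injOn_Iio_orderOf (by simp only [Set.mem_Iio, hou]; omega)
      (by simp only [Set.mem_Iio, hou]; omega) h2
  have key1 : (s : ℝ) * SS (u : F) = ∑ j ∈ Finset.range s, SS ((u : F) * (v : F) ^ j) := by
    rw [Finset.sum_congr rfl fun j _ => inv (u : F) j]
    rw [Finset.sum_const, Finset.card_range, nsmul_eq_mul]
  have key2 : ∑ j ∈ Finset.range s, SS ((u : F) * (v : F) ^ j)
      = ∑ d ∈ (Finset.range s).image (fun j => (u : F) * (v : F) ^ j), SS d := by
    rw [Finset.sum_image (fun x hx y hy h => hinj (by simpa using hx) (by simpa using hy) h)]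
  have key3 : ∑ d ∈ (Finset.range s).image (fun j => (u : F) * (v : F) ^ j), SS d
      ≤ ∑ d : F, SS d :=
    Finset.sum_le_sum_of_subset_of_nonneg (Finset.subset_univ _) (fun i _ _ => hSSnn i)
  have key4 : ∑ d : F, SS d = (Fintype.card F : ℝ) * s := by
    have := moment ψ hψ 1 v s (le_refl _)
    rw [← this]
    refine Finset.sum_congr rfl fun d _ => ?_
    simp only [hSS, Units.val_one, one_mul]
  have : (s : ℝ) * SS (u : F) ≤ (s : ℝ) * (Fintype.card F : ℝ) := by
    rw [key1, key2]
    calc _ ≤ ∑ d : F, SS d := key3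
    _ = (Fintype.card F : ℝ) * s := key4
    _ = (s : ℝ) * (Fintype.card F : ℝ) := by ring
  have hfin := le_of_mul_le_mul_left this (by exact_mod_cast hs0 : (0:ℝ) < (s:ℝ))
  simpa [hSS] using hfin

end Statement1Aux


set_option maxHeartbeats 1000000 in
/-- If `r` is an integer with `q^{n+1} · P⁻² · log q < r ≤ s_{n+1}`, then the number of
elements `b ∈ F` for which `S_{f_b}(r)` is empty is at most `q / log q`. -/
theorem statement1 (p ν : ℕ) (hp : p.Prime) (hν : 1 ≤ ν)
    (F : Type*) [Field F] [Fintype F] [DecidableEq F]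
    (hq : Fintype.card F = p ^ ν)
    (n : ℕ) (hn : 1 ≤ n)
    (a g : Fin (n + 1) → Fˣ)
    (r : ℕ)
    (hr : (Fintype.card F : ℝ) ^ (n + 1) / (ordProd g : ℝ) ^ 2 *
        Real.log (Fintype.card F) < (r : ℝ))
    (hrs : r ≤ orderOf (g (Fin.last n))) :
    (({b : F | solSet a g b r = ∅}.ncard : ℝ)) ≤
      (Fintype.card F : ℝ) / Real.log (Fintype.card F) := by
  classical
  have hq2 : 1 < Fintype.card F := Fintype.one_lt_card
  set q : ℕ := Fintype.card F with hqdef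
  have hQ1 : (1 : ℝ) < (q : ℝ) := by exact_mod_cast hq2
  have hQ0 : (0 : ℝ) < (q : ℝ) := by linarith
  have hlog : 0 < Real.log q := Real.log_pos hQ1
  -- the character
  set ψ := AddChar.FiniteField.primitiveChar_to_Complex F with hψdef
  have hψ : ∀ t : F, ∑ c : F, ψ (c * t) = if t = 0 then (q : ℂ) else 0 := by
    intro t
    rw [show (∑ c : F, ψ (c * t)) = ∑ c : F, (AddChar.FiniteField.primitiveChar_to_Complex F) (c * t) from rfl,
      AddChar.sum_mulShift t (AddChar.FiniteField.primitiveChar_to_Complex_isPrimitive F)]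
    split <;> simp [hqdef]
  -- basic data
  set len : Fin (n + 1) → ℕ := fun i => if i = Fin.last n then r else orderOf (g i) with hlen
  set f0 : (Fin (n + 1) → ℕ) → F := fun x => ∑ i, (a i : F) * (g i : F) ^ x i with hf0
  set box : Finset (Fin (n + 1) → ℕ) := Fintype.piFinset fun i => Finset.range (len i) with hbox
  set P : ℕ := ordProd g with hPdef
  have hP0 : 0 < P := Finset.prod_pos fun i _ => orderOf_pos _
  have hP0R : (0 : ℝ) < (P : ℝ) := by exact_mod_cast hP0
  have hr0 : 0 < r := by
    have hpos : (0 : ℝ) < (q : ℝ) ^ (n + 1) / (P : ℝ) ^ 2 * Real.log q := by positivity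
    have : (0 : ℝ) < (r : ℝ) := lt_trans hpos hr
    exact_mod_cast this
  have hR0 : (0 : ℝ) < (r : ℝ) := by exact_mod_cast hr0
  have hboxcard : box.card = P * r := by
    rw [hbox, Fintype.card_piFinset]
    simp only [Finset.card_range]
    rw [Fin.prod_univ_castSucc]
    have h1 : ∀ i : Fin n, len i.castSucc = orderOf (g i.castSucc) := fun i => by
      rw [hlen]; exact if_neg (Fin.castSucc_lt_last i).ne
    have h2 : len (Fin.last n) = r := by rw [hlen]; exact if_pos rfl
    rw [h2, hPdef, ordProd]
    congr 1
    exact Finset.prod_congr rfl fun i _ => h1 i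
  -- solution counts
  set N : F → ℕ := fun b => (box.filter fun x => f0 x = b).card with hN
  have hsolN : ∀ b : F, solSet a g b r = box.filter fun x => f0 x = b := by
    intro b
    show (expBox g r).filter (fun x => expPoly a g b x = 0) = _
    have hbe : expBox g r = box := rfl
    rw [hbe]
    exact Finset.filter_congr fun x _ => by
      simp only [expPoly, hf0, sub_eq_zero]
  have hsum : ∑ b : F, N b = P * r := by
    rw [← hboxcard]
    exact (Finset.card_eq_sum_card_fiberwise fun x _ => Finset.mem_univ (f0 x)).symm
  set Eb : Finset F := Finset.univ.filter fun b => N b = 0 with hEb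
  set Ib : Finset F := Finset.univ.filter fun b => ¬N b = 0 with hIb
  have hEI : Eb.card + Ib.card = q := by
    rw [hEb, hIb, Finset.card_filter_add_card_filter_not, Finset.card_univ]
  have hgoalset : {b : F | solSet a g b r = ∅} = (Eb : Set F) := by
    ext b
    simp only [Set.mem_setOf_eq, hEb, Finset.coe_filter, Finset.mem_univ, true_and,
      Set.mem_setOf_eq]
    rw [hsolN b, ← Finset.card_eq_zero]
  rw [hgoalset, Set.ncard_coe_finset]
  -- character sums
  set W : F → ℂ := fun c => ∑ x ∈ box, ψ (c * f0 x) with hW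
  set T : F → ℂ := fun c => ∑ x ∈ Finset.range r,
    ψ (c * ((a (Fin.last n) : F) * (g (Fin.last n) : F) ^ x)) with hT
  -- main second moment identity
  have hcount : ∑ x ∈ box, ∑ y ∈ box, (if f0 x = f0 y then (1 : ℝ) else 0)
      = ∑ b : F, ((N b : ℝ)) ^ 2 := by
    have h1 : ∀ x ∈ box, ∑ y ∈ box, (if f0 x = f0 y then (1 : ℝ) else 0) = (N (f0 x) : ℝ) := by
      intro x hx
      rw [Finset.sum_boole]
      congr 1
      rw [hN]
      congr 1
      exact Finset.filter_congr fun y _ => by simp [eq_comm]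
    rw [Finset.sum_congr rfl h1,
      ← Finset.sum_fiberwise_of_maps_to (fun x (_ : x ∈ box) => Finset.mem_univ (f0 x))
        (fun x => (N (f0 x) : ℝ))]
    refine Finset.sum_congr rfl fun b _ => ?_
    have hterm : ∀ x ∈ box.filter (fun x => f0 x = b), (N (f0 x) : ℝ) = (N b : ℝ) :=
      fun x hx => by rw [(Finset.mem_filter.mp hx).2]
    rw [Finset.sum_congr rfl hterm, Finset.sum_const, nsmul_eq_mul]
    have hcard : (box.filter fun x => f0 x = b).card = N b := rfl
    rw [hcard, sq]
  have hMiden : ∑ c : F, ‖W c‖ ^ 2 = (q : ℝ) * ∑ b : F, ((N b : ℝ)) ^ 2 := by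
    rw [hW]
    have := Statement1Aux.sum_normSq ψ hψ box f0
    rw [this, hcount]
  -- W 0
  have hW0 : ‖W 0‖ ^ 2 = ((P : ℝ) * (r : ℝ)) ^ 2 := by
    have h1 : W 0 = ((P * r : ℕ) : ℂ) := by
      rw [hW]
      simp only [zero_mul, AddChar.map_zero_eq_one]
      rw [Finset.sum_const, hboxcard]
      simp
    rw [h1]
    rw [Complex.norm_natCast]
    push_cast
    ring
  -- factorization
  have hWfac : ∀ c : F, W c
      = (∏ i : Fin n, ∑ x ∈ Finset.range (orderOf (g i.castSucc)),
          ψ (c * ((a i.castSucc : F) * (g i.castSucc : F) ^ x))) * T c := by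
    intro c
    have h1 : W c = ∑ x ∈ box, ∏ i, ψ (c * ((a i : F) * (g i : F) ^ (x i))) := by
      refine Finset.sum_congr rfl fun x _ => ?_
      rw [hf0]
      simp only
      rw [Finset.mul_sum]
      exact Statement1Aux.addChar_map_sum ψ _ _
    rw [h1, hbox, ← Finset.prod_univ_sum (fun i => Finset.range (len i)) (fun i j => ψ (c * ((a i : F) * (g i : F) ^ j)))]
    rw [Fin.prod_univ_castSucc]
    congr 1
    · refine Finset.prod_congr rfl fun i _ => ?_
      have : len i.castSucc = orderOf (g i.castSucc) := by
        rw [hlen]; exact if_neg (Fin.castSucc_lt_last i).ne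
      rw [this]
    · have : len (Fin.last n) = r := by rw [hlen]; exact if_pos rfl
      rw [this, hT]
  -- bound for nonzero c
  have hWbound : ∀ c : F, c ≠ 0 → ‖W c‖ ^ 2 ≤ (q : ℝ) ^ n * ‖T c‖ ^ 2 := by
    intro c hc
    rw [hWfac c, norm_mul, mul_pow, norm_prod]
    have hb1 : (∏ i : Fin n, ‖∑ x ∈ Finset.range (orderOf (g i.castSucc)),
        ψ (c * ((a i.castSucc : F) * (g i.castSucc : F) ^ x))‖) ^ 2
        = ∏ i : Fin n, ‖∑ x ∈ Finset.range (orderOf (g i.castSucc)),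
        ψ (c * ((a i.castSucc : F) * (g i.castSucc : F) ^ x))‖ ^ 2 := by
      rw [← Finset.prod_pow]
    rw [hb1]
    have hb2 : ∏ i : Fin n, ‖∑ x ∈ Finset.range (orderOf (g i.castSucc)),
        ψ (c * ((a i.castSucc : F) * (g i.castSucc : F) ^ x))‖ ^ 2 ≤ (q : ℝ) ^ n := by
      calc ∏ i : Fin n, ‖∑ x ∈ Finset.range (orderOf (g i.castSucc)),
          ψ (c * ((a i.castSucc : F) * (g i.castSucc : F) ^ x))‖ ^ 2
          ≤ ∏ _i : Fin n, (q : ℝ) := by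
            refine Finset.prod_le_prod (fun i _ => by positivity) (fun i _ => ?_)
            have hpt := Statement1Aux.pointwise ψ hψ (Units.mk0 c hc * a i.castSucc)
              (g i.castSucc)
            have heq : ∑ x ∈ Finset.range (orderOf (g i.castSucc)),
                ψ (((Units.mk0 c hc * a i.castSucc : Fˣ) : F) * (g i.castSucc : F) ^ x)
                = ∑ x ∈ Finset.range (orderOf (g i.castSucc)),
                  ψ (c * ((a i.castSucc : F) * (g i.castSucc : F) ^ x)) :=
              Finset.sum_congr rfl fun x _ => by
                rw [Units.val_mul, Units.val_mk0, mul_assoc]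
            rw [heq] at hpt
            exact hpt
        _ = (q : ℝ) ^ n := by
            rw [Finset.prod_const, Finset.card_univ, Fintype.card_fin]
    exact mul_le_mul_of_nonneg_right hb2 (by positivity)
  -- sum of ‖T c‖²
  have hTsum : ∑ c : F, ‖T c‖ ^ 2 = (q : ℝ) * r := by
    rw [hT]
    have hm := Statement1Aux.moment ψ hψ (a (Fin.last n)) (g (Fin.last n)) r hrs
    simpa using hm
  -- main bound
  have hMain : (q : ℝ) * ∑ b : F, ((N b : ℝ)) ^ 2
      ≤ ((P : ℝ) * (r : ℝ)) ^ 2 + (q : ℝ) ^ n * ((q : ℝ) * r) := by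
    rw [← hMiden, ← Finset.add_sum_erase Finset.univ _ (Finset.mem_univ (0 : F))]
    refine add_le_add (le_of_eq hW0) ?_
    calc ∑ c ∈ Finset.univ.erase (0 : F), ‖W c‖ ^ 2
        ≤ ∑ c ∈ Finset.univ.erase (0 : F), (q : ℝ) ^ n * ‖T c‖ ^ 2 :=
          Finset.sum_le_sum fun c hc => hWbound c (Finset.ne_of_mem_erase hc)
      _ = (q : ℝ) ^ n * ∑ c ∈ Finset.univ.erase (0 : F), ‖T c‖ ^ 2 := by
          rw [Finset.mul_sum]
      _ ≤ (q : ℝ) ^ n * ∑ c : F, ‖T c‖ ^ 2 := by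
          refine mul_le_mul_of_nonneg_left ?_ (by positivity)
          exact Finset.sum_le_sum_of_subset_of_nonneg (Finset.erase_subset _ _)
            fun i _ _ => by positivity
      _ = (q : ℝ) ^ n * ((q : ℝ) * r) := by rw [hTsum]
  -- Cauchy-Schwarz
  have hCS : ((P : ℝ) * (r : ℝ)) ^ 2 ≤ (Ib.card : ℝ) * ∑ b : F, ((N b : ℝ)) ^ 2 := by
    have h1 : (∑ b ∈ Ib, (N b : ℝ)) ^ 2 ≤ (Ib.card : ℝ) * ∑ b ∈ Ib, ((N b : ℝ)) ^ 2 :=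
      sq_sum_le_card_mul_sum_sq
    have h2 : ∑ b ∈ Ib, (N b : ℝ) = (P : ℝ) * (r : ℝ) := by
      have h2a : ∑ b ∈ Ib, N b = ∑ b : F, N b := by
        rw [hIb]
        refine Finset.sum_subset (Finset.filter_subset _ _) fun x _ hx => ?_
        simpa using hx
      have := congrArg (fun m : ℕ => (m : ℝ)) (h2a.trans hsum)
      push_cast at this
      exact this
    have h3 : ∑ b ∈ Ib, ((N b : ℝ)) ^ 2 ≤ ∑ b : F, ((N b : ℝ)) ^ 2 :=
      Finset.sum_le_sum_of_subset_of_nonneg (Finset.subset_univ _) fun i _ _ => by positivity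
    calc ((P : ℝ) * (r : ℝ)) ^ 2 = (∑ b ∈ Ib, (N b : ℝ)) ^ 2 := by rw [h2]
      _ ≤ (Ib.card : ℝ) * ∑ b ∈ Ib, ((N b : ℝ)) ^ 2 := h1
      _ ≤ (Ib.card : ℝ) * ∑ b : F, ((N b : ℝ)) ^ 2 :=
          mul_le_mul_of_nonneg_left h3 (by positivity)
  -- final arithmetic
  set M : ℝ := ∑ b : F, ((N b : ℝ)) ^ 2 with hM
  set E : ℝ := (Eb.card : ℝ) with hE
  set K : ℝ := (Ib.card : ℝ) with hK
  have hE0 : 0 ≤ E := Nat.cast_nonneg _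
  have hK0 : 0 ≤ K := Nat.cast_nonneg _
  have hM0 : 0 ≤ M := Finset.sum_nonneg fun i _ => by positivity
  have hEK : E + K = (q : ℝ) := by
    rw [hE, hK]
    exact_mod_cast congrArg (fun m : ℕ => (m : ℝ)) hEI
  have hKQ : K ≤ (q : ℝ) := by linarith
  have hPrpos : (0 : ℝ) < (P : ℝ) * (r : ℝ) := by positivity
  have hMpos : 0 < M := by nlinarith [hCS, sq_nonneg ((P:ℝ) * (r:ℝ))]
  -- E * M ≤ q^(n+1) * r
  have t1 : E * M ≤ (q : ℝ) ^ (n + 1) * (r : ℝ) := by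
    have e1 : E = (q : ℝ) - K := by linarith
    have : E * M = (q : ℝ) * M - K * M := by rw [e1]; ring
    rw [this]
    have hpow : (q : ℝ) ^ n * ((q : ℝ) * r) = (q : ℝ) ^ (n + 1) * (r : ℝ) := by
      rw [pow_succ]; ring
    nlinarith [hMain, hCS]
  have t2 : ((P : ℝ) * (r : ℝ)) ^ 2 ≤ (q : ℝ) * M := by nlinarith [hCS, hKQ, hM0]
  have t8 : E * ((P : ℝ) ^ 2 * (r : ℝ)) ≤ (q : ℝ) ^ (n + 2) := by
    have t3 : E * (((P : ℝ) * (r : ℝ)) ^ 2) ≤ E * ((q : ℝ) * M) :=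
      mul_le_mul_of_nonneg_left t2 hE0
    have t5 : (q : ℝ) * (E * M) ≤ (q : ℝ) * ((q : ℝ) ^ (n + 1) * (r : ℝ)) :=
      mul_le_mul_of_nonneg_left t1 (le_of_lt hQ0)
    have t6 : E * (((P : ℝ) * (r : ℝ)) ^ 2) ≤ (q : ℝ) ^ (n + 2) * (r : ℝ) := by
      calc E * (((P : ℝ) * (r : ℝ)) ^ 2) ≤ E * ((q : ℝ) * M) := t3
        _ = (q : ℝ) * (E * M) := by ring
        _ ≤ (q : ℝ) * ((q : ℝ) ^ (n + 1) * (r : ℝ)) := t5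
        _ = (q : ℝ) ^ (n + 2) * (r : ℝ) := by rw [pow_succ]; ring
    have := (mul_le_mul_iff_of_pos_right hR0).mpr (le_refl (1:ℝ))
    have t7 : (E * ((P : ℝ) ^ 2 * (r : ℝ))) * (r : ℝ) ≤ ((q : ℝ) ^ (n + 2)) * (r : ℝ) := by
      calc (E * ((P : ℝ) ^ 2 * (r : ℝ))) * (r : ℝ) = E * (((P : ℝ) * (r : ℝ)) ^ 2) := by ring
        _ ≤ (q : ℝ) ^ (n + 2) * (r : ℝ) := t6
    exact le_of_mul_le_mul_right t7 hR0
  have hr2 : (q : ℝ) ^ (n + 1) * Real.log q < (r : ℝ) * (P : ℝ) ^ 2 := by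
    have hP2 : (0 : ℝ) < (P : ℝ) ^ 2 := by positivity
    rw [div_mul_eq_mul_div, div_lt_iff₀ hP2] at hr
    exact hr
  rw [le_div_iff₀ hlog]
  have t11 : (E * Real.log q) * ((P : ℝ) ^ 2 * (r : ℝ))
      ≤ (q : ℝ) * ((P : ℝ) ^ 2 * (r : ℝ)) := by
    calc (E * Real.log q) * ((P : ℝ) ^ 2 * (r : ℝ))
        = (E * ((P : ℝ) ^ 2 * (r : ℝ))) * Real.log q := by ring
      _ ≤ (q : ℝ) ^ (n + 2) * Real.log q :=
          mul_le_mul_of_nonneg_right t8 (le_of_lt hlog)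
      _ = (q : ℝ) * ((q : ℝ) ^ (n + 1) * Real.log q) := by rw [pow_succ]; ring
      _ ≤ (q : ℝ) * ((r : ℝ) * (P : ℝ) ^ 2) :=
          mul_le_mul_of_nonneg_left (le_of_lt hr2) (le_of_lt hQ0)
      _ = (q : ℝ) * ((P : ℝ) ^ 2 * (r : ℝ)) := by ring
  exact le_of_mul_le_mul_right t11 (by positivity)
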